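/- Let G be a finite connected simple graph with vertex set V and a distinguished root r ∈ V, let P : V → Option V and H : V → ℕ satisfy: P(r) = none and H(r) = 0; and for every v ≠ r, P(v) = some u for some neighbor u of v with H(u) = min{H(w) : w a neighbor of v} and H(v) = H(u) + 1. Then H(v) = d(r,v) for every vertex v, following the parent pointers from any vertex v reaches r in exactly d(r,v) steps, and the set of edges {v, u} with P(v) = some u forms a spanning tree of G in which the distance from each vertex to r equals its distance to r in G. -/

import Mathlib

/-- In a legitimate configuration of the `min+1` protocol with root `r` (no Byzantine vertex):
heights equal BFS distances to `r`, parent pointers lead from any vertex to `r` in exactly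
`d(r,v)` steps, and the parent edges form a spanning tree of `G` preserving distances to `r`. -/
theorem minPlusOne_legitimate_spanning_tree
    {V : Type*} [Fintype V] (G : SimpleGraph V) (hG : G.Connected) (r : V)
    (P : V → Option V) (H : V → ℕ)
    (hProot : P r = none) (hHroot : H r = 0)
    (hvert : ∀ v : V, v ≠ r → ∃ u : V, P v = some u ∧ G.Adj v u ∧
      H u = sInf (H '' (G.neighborSet v)) ∧ H v = H u + 1)
    (step : V → V)
    (hstep : ∀ v u : V, P v = some u → step v = u)
    (T : SimpleGraph V)
    (hT : ∀ a b : V, T.Adj a b ↔ (P a = some b ∨ P b = some a)) :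
    (∀ v : V, H v = G.dist r v) ∧
    (∀ v : V, step^[G.dist r v] v = r ∧ ∀ i < G.dist r v, step^[i] v ≠ r) ∧
    T.IsTree ∧ T ≤ G ∧ (∀ v : V, T.dist r v = G.dist r v) := by
  classical
  -- parent pointers give adjacency and the height relation
  have hadj : ∀ v u : V, P v = some u → G.Adj v u ∧ H v = H u + 1 := by
    intro v u hpv
    have hvr : v ≠ r := by
      rintro rfl
      rw [hProot] at hpv
      cases hpv
    obtain ⟨u', hpu', hadj', _, hH'⟩ := hvert v hvr
    rw [hpv] at hpu'
    injection hpu' with h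
    subst h
    exact ⟨hadj', hH'⟩
  have hTsub : T ≤ G := by
    intro a b hab
    rcases (hT a b).1 hab with h | h
    · exact (hadj a b h).1
    · exact ((hadj b a h).1).symm
  have horient : ∀ x y : V, T.Adj x y → H y ≤ H x → P x = some y := by
    intro x y hxy hle
    rcases (hT x y).1 hxy with h | h
    · exact h
    · have := (hadj y x h).2
      omega
  -- distance is at most height
  have key1 : ∀ v : V, G.dist r v ≤ H v := by
    intro v
    generalize hn : H v = n
    induction n using Nat.strong_induction_on generalizing v with
    | _ n ih =>
      by_cases hvr : v = r
      · subst hvr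
        simp [SimpleGraph.dist_self]
      · obtain ⟨u, hpu, hadjvu, _, hH⟩ := hvert v hvr
        have h1 : G.dist r u ≤ H u := ih (H u) (by omega) u rfl
        have h2 : G.dist r v ≤ G.dist r u + 1 := by
          obtain ⟨p, hp⟩ := hG.exists_walk_length_eq_dist r u
          calc G.dist r v ≤ (p.concat hadjvu.symm).length := SimpleGraph.dist_le _
            _ = G.dist r u + 1 := by rw [SimpleGraph.Walk.length_concat, hp]
        omega
  -- height is at most distance
  have key2 : ∀ v : V, H v ≤ G.dist r v := by
    intro v
    generalize hn : G.dist r v = n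
    induction n using Nat.strong_induction_on generalizing v with
    | _ n ih =>
      by_cases hvr : v = r
      · subst hvr
        rw [hHroot]
        omega
      · obtain ⟨p, hp⟩ := hG.exists_walk_length_eq_dist v r
        have hp' : p.length = n := by rw [hp, SimpleGraph.dist_comm]; exact hn
        clear hp
        cases p with
        | nil => exact absurd rfl hvr
        | @cons _ w _ h q =>
          have hq : G.dist r w ≤ q.length := by
            rw [SimpleGraph.dist_comm]
            exact SimpleGraph.dist_le q
          have hqlen : q.length + 1 = n := by simpa using hp'
          have hIH : H w ≤ G.dist r w := ih (G.dist r w) (by omega) w rfl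
          obtain ⟨u, hpu, hadjvu, hmin, hH⟩ := hvert v hvr
          have hsInf : H u ≤ H w := by
            rw [hmin]
            exact Nat.sInf_le ⟨w, h, rfl⟩
          omega
  have hHd : ∀ v : V, H v = G.dist r v := fun v => le_antisymm (key2 v) (key1 v)
  -- step pointers
  have hstepP : ∀ v : V, v ≠ r → P v = some (step v) ∧ H v = H (step v) + 1 ∧
      T.Adj v (step v) := by
    intro v hvr
    obtain ⟨u, hpu, _, _, hH⟩ := hvert v hvr
    have hs : step v = u := hstep v u hpu
    subst hs
    exact ⟨hpu, hH, (hT v (step v)).2 (Or.inl hpu)⟩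
  -- iterating step reaches the root in exactly H v steps
  have hiter : ∀ v : V, step^[H v] v = r ∧ ∀ i < H v, step^[i] v ≠ r := by
    intro v
    generalize hn : H v = n
    induction n using Nat.strong_induction_on generalizing v with
    | _ n ih =>
      by_cases hvr : v = r
      · subst hvr
        rw [hHroot] at hn
        subst hn
        exact ⟨rfl, by omega⟩
      · obtain ⟨hpu, hH, _⟩ := hstepP v hvr
        have hlt : H (step v) < n := by omega
        obtain ⟨h1, h2⟩ := ih (H (step v)) hlt (step v) rfl
        constructor
        · have hn' : n = H (step v) + 1 := by omega
          rw [hn', Function.iterate_succ_apply]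
          exact h1
        · intro i hi
          cases i with
          | zero => simpa using hvr
          | succ j =>
            rw [Function.iterate_succ_apply]
            exact h2 j (by omega)
  -- walks to the root in T
  have hwalk : ∀ v : V, ∃ p : T.Walk v r, p.length = H v := by
    intro v
    generalize hn : H v = n
    induction n using Nat.strong_induction_on generalizing v with
    | _ n ih =>
      by_cases hvr : v = r
      · subst hvr
        exact ⟨SimpleGraph.Walk.nil, by simp [← hn, hHroot]⟩
      · obtain ⟨hpu, hH, hadjT⟩ := hstepP v hvr
        obtain ⟨p, hp⟩ := ih (H (step v)) (by omega) (step v) rfl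
        exact ⟨SimpleGraph.Walk.cons hadjT p, by simp [hp, ← hn]; omega⟩
  have hTconn : T.Connected := by
    rw [SimpleGraph.connected_iff_exists_forall_reachable]
    refine ⟨r, fun w => ?_⟩
    obtain ⟨p, _⟩ := hwalk w
    exact p.reverse.reachable
  -- key decomposition lemma: a walk from a max-height vertex starts with the parent edge
  have hsecond : ∀ (m : V) (c : T.Walk m m), ¬ c.Nil → (∀ x ∈ c.support, H x ≤ H m) →
      ∃ (h : T.Adj m (step m)) (q : T.Walk (step m) m), c = SimpleGraph.Walk.cons h q := by
    intro m c hnil hmax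
    cases c with
    | nil => simp at hnil
    | @cons _ a _ h q =>
      have ha : H a ≤ H m := by
        apply hmax a
        rw [SimpleGraph.Walk.support_cons]
        exact List.mem_cons_of_mem _ q.start_mem_support
      have hP : P m = some a := horient m a h ha
      have hs : step m = a := hstep m a hP
      subst hs
      exact ⟨h, q, rfl⟩
  have hacyc : T.IsAcyclic := by
    intro v c hc
    obtain ⟨m, hm, hmax⟩ : ∃ m ∈ c.support, ∀ x ∈ c.support, H x ≤ H m := by
      obtain ⟨m, hm, hmax⟩ := Finset.exists_max_image c.support.toFinset H
        ⟨v, List.mem_toFinset.2 c.start_mem_support⟩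
      exact ⟨m, List.mem_toFinset.1 hm, fun x hx => hmax x (List.mem_toFinset.2 hx)⟩
    set c' := c.rotate m hm with hc'def
    have hc' : c'.IsCycle := hc.rotate hm
    have hmem : ∀ x, x ∈ c'.support → x ∈ c.support := by
      intro x hx
      rw [c'.support_eq_cons] at hx
      rcases List.mem_cons.mp hx with rfl | hx
      · exact hm
      · have hperm := c.support_rotate m hm
        have hx' : x ∈ c.support.tail := hperm.perm.mem_iff.1 hx
        rw [c.support_eq_cons]
        exact List.mem_cons_of_mem _ hx'
    have hmax' : ∀ x ∈ c'.support, H x ≤ H m := fun x hx => hmax x (hmem x hx)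
    obtain ⟨h₁, q₁, he₁⟩ := hsecond m c' hc'.not_nil hmax'
    have hrevnil : ¬ c'.reverse.Nil := by
      rw [SimpleGraph.Walk.nil_iff_length_eq, SimpleGraph.Walk.length_reverse]
      intro h
      exact hc'.not_nil (SimpleGraph.Walk.nil_iff_length_eq.2 h)
    have hmaxrev : ∀ x ∈ c'.reverse.support, H x ≤ H m := by
      intro x hx
      apply hmax'
      rwa [SimpleGraph.Walk.support_reverse, List.mem_reverse] at hx
    obtain ⟨h₂, q₂, he₂⟩ := hsecond m c'.reverse hrevnil hmaxrev
    have hedges : c'.edges = s(m, step m) :: q₁.edges := by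
      rw [he₁, SimpleGraph.Walk.edges_cons]
    have hedgesrev : c'.edges.reverse = s(m, step m) :: q₂.edges := by
      rw [← SimpleGraph.Walk.edges_reverse, he₂, SimpleGraph.Walk.edges_cons]
    have h3 : s(m, step m) :: q₁.edges = q₂.edges.reverse ++ [s(m, step m)] := by
      rw [← hedges, ← List.reverse_reverse c'.edges, hedgesrev, List.reverse_cons]
    have hlen3 := hc'.three_le_length
    have hlenrev : c'.reverse.length = q₂.length + 1 := by
      rw [he₂]; simp
    have hq2len : q₂.length + 1 = c'.length := by
      rw [← hlenrev, SimpleGraph.Walk.length_reverse]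
    have hq2ne : q₂.edges.reverse ≠ [] := by
      intro hnil'
      have he0 : q₂.edges = [] := by simpa using hnil'
      have hl : q₂.edges.length = q₂.length := q₂.length_edges
      rw [he0] at hl
      simp at hl
      omega
    obtain ⟨f, t, hft⟩ : ∃ f t, q₂.edges.reverse = f :: t := by
      cases hq : q₂.edges.reverse with
      | nil => exact absurd hq hq2ne
      | cons f t => exact ⟨f, t, rfl⟩
    rw [hft, List.cons_append] at h3
    injection h3 with hf hq1
    have hmem_e : s(m, step m) ∈ q₁.edges := by rw [hq1]; simp
    have htrail : c'.IsTrail := hc'.isTrail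
    rw [he₁, SimpleGraph.Walk.isTrail_cons] at htrail
    exact htrail.2 hmem_e
  have hTdist : ∀ v : V, T.dist r v = G.dist r v := by
    intro v
    apply le_antisymm
    · obtain ⟨p, hp⟩ := hwalk v
      calc T.dist r v = T.dist v r := SimpleGraph.dist_comm
        _ ≤ p.length := SimpleGraph.dist_le p
        _ = G.dist r v := by rw [hp, hHd v]
    · obtain ⟨p, hp⟩ := hTconn.exists_walk_length_eq_dist r v
      calc G.dist r v ≤ (p.mapLe hTsub).length := SimpleGraph.dist_le _
        _ = T.dist r v := by simp [hp]
  refine ⟨hHd, fun v => ?_, ⟨hTconn, hacyc⟩, hTsub, hTdist⟩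
  rw [← hHd v]
  exact hiter v
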